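/- Let a ∈ ℝ with 0.892644 ≤ a < 1. Then there exists a unique r* ∈ (0, a) such that a r* + (1/a − a)·(−log(1 − a r*)/a − r*) = 1, and: (i) for every g(z) = ∑_{n≥0} b_n zⁿ analytic on 𝔻 with ‖g‖_∞ ≤ 1 and |b_0| = a, and every 0 ≤ r ≤ r*, one has ∑_{n≥0} |b_n| r^{n+1}/(n+1) ≤ 1; (ii) for every r with r* < r < 1 there exists such a function g for which ∑_{n≥0} |b_n| r^{n+1}/(n+1) > 1. (Equivalently, via f′ = g, the Bohr radius R_{∂→id₁}(a) of the pair (differentiation, identity) with initial coefficient a equals r* = (1/a)(1 + ((a²−1)/(2a²−1)) W(((1−2a²)/(a²−1)) e^{−1})) in terms of the Lambert W function.) -/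

import Mathlib

open Metric Filter Finset intervalIntegral MeasureTheory

private lemma num_base : (1 - (0.892644:ℝ)^2) * Real.exp (2 * (0.892644:ℝ)^2) < 1 := by
  set x : ℝ := (0.892644:ℝ)^2/2 with hxdef
  have hx0 : (0:ℝ) ≤ x := by norm_num [hxdef]
  have hx1 : |x| ≤ 1 := by rw [abs_of_nonneg hx0]; norm_num [hxdef]
  have hb := Real.exp_bound hx1 (n := 8) (by norm_num)
  have h1 : Real.exp x ≤ ∑ i ∈ range 8, x ^ i / i.factorial
      + |x| ^ 8 * ((8:ℕ).succ / ((8:ℕ).factorial * 8)) := by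
    have := (abs_le.1 hb).2
    linarith
  have h2 : Real.exp (2 * (0.892644:ℝ)^2) = (Real.exp x)^4 := by
    rw [← Real.exp_nat_mul]
    norm_num [hxdef]
  rw [h2]
  have hq : Real.exp x ≤ 1.48944961 := by
    refine h1.trans ?_
    rw [abs_of_nonneg hx0]
    simp only [Finset.sum_range_succ, Finset.sum_range_zero]
    norm_num [Nat.factorial, hxdef]
  have hexp0 : (0:ℝ) ≤ Real.exp x := (Real.exp_pos x).le
  have h3 : (Real.exp x)^4 ≤ (1.48944961:ℝ)^4 := pow_le_pow_left₀ hexp0 hq 4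
  nlinarith [h3]

private lemma num_all {t : ℝ} (h0 : (0.892644:ℝ)^2 ≤ t) (h1 : t < 1) :
    (1 - t) * Real.exp (2*t) < 1 := by
  have ht0h : (1/2:ℝ) < (0.892644:ℝ)^2 := by norm_num
  have hδ0 : 0 ≤ t - (0.892644:ℝ)^2 := by linarith
  have h2δ : 2*(t - (0.892644:ℝ)^2) < 1 := by nlinarith
  have hexp : Real.exp (2*(t-(0.892644:ℝ)^2)) ≤ 1/(1-2*(t-(0.892644:ℝ)^2)) :=
    Real.exp_bound_div_one_sub_of_interval (by linarith) h2δ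
  have key : (1-t) * Real.exp (2*t) ≤ (1-(0.892644:ℝ)^2) * Real.exp (2*(0.892644:ℝ)^2) := by
    have hsplit : Real.exp (2*t)
        = Real.exp (2*(0.892644:ℝ)^2) * Real.exp (2*(t-(0.892644:ℝ)^2)) := by
      rw [← Real.exp_add]; ring_nf
    rw [hsplit]
    have h5 : (1-t) * Real.exp (2*(t-(0.892644:ℝ)^2))
        ≤ (1-t)*(1/(1-2*(t-(0.892644:ℝ)^2))) := by
      apply mul_le_mul_of_nonneg_left hexp (by linarith)
    have h4 : (1-t) * Real.exp (2*(t-(0.892644:ℝ)^2)) ≤ (1-(0.892644:ℝ)^2) := by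
      refine h5.trans ?_
      rw [mul_one_div, div_le_iff₀ (by linarith)]
      nlinarith
    nlinarith [Real.exp_pos (2*(0.892644:ℝ)^2)]
  exact lt_of_le_of_lt key num_base

noncomputable def bohrF (a r : ℝ) : ℝ :=
  a * r + (1 / a - a) * (-Real.log (1 - a * r) / a - r)

private lemma bohrF_eq {a : ℝ} (ha : a ≠ 0) (r : ℝ) :
    bohrF a r = (2*a - 1/a)*r - ((1/a-a)/a) * Real.log (1-a*r) := by
  unfold bohrF; field_simp; ring

private lemma bohrF_zero (a : ℝ) : bohrF a 0 = 0 := by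
  unfold bohrF; simp

private lemma bohrF_strictMonoOn {a : ℝ} (ha0 : 0.892644 ≤ a) (ha1 : a < 1) :
    StrictMonoOn (bohrF a) (Set.Icc 0 1) := by
  have hA : (0:ℝ) < a := by linarith
  have ha2 : 1/2 < a^2 := by nlinarith
  intro x hx y hy hxy
  rw [bohrF_eq hA.ne' x, bohrF_eq hA.ne' y]
  have hax : 0 < 1 - a*y := by nlinarith [hy.2]
  have hlog : Real.log (1-a*y) ≤ Real.log (1-a*x) := by
    apply Real.log_le_log hax
    nlinarith [hx.1]
  have h1a : a ≤ 1/a := by rw [le_div_iff₀ hA]; nlinarith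
  have hc : 0 ≤ (1/a - a)/a := div_nonneg (by linarith) hA.le
  have hcoef : 0 < 2*a - 1/a := by
    rw [sub_pos, div_lt_iff₀ hA]; nlinarith
  have h1 : (2*a-1/a)*x < (2*a-1/a)*y := mul_lt_mul_of_pos_left hxy hcoef
  nlinarith [mul_le_mul_of_nonneg_left hlog hc]

private lemma bohrF_continuousOn {a : ℝ} (ha0 : 0.892644 ≤ a) (ha1 : a < 1) :
    ContinuousOn (bohrF a) (Set.Icc 0 1) := by
  have hA : (0:ℝ) < a := by linarith
  unfold bohrF
  apply ContinuousOn.add (by fun_prop)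
  apply ContinuousOn.mul continuousOn_const
  apply ContinuousOn.sub _ (by fun_prop)
  apply ContinuousOn.div _ continuousOn_const (fun x _ => hA.ne')
  apply ContinuousOn.neg
  apply ContinuousOn.log (by fun_prop)
  intro x hx
  have h1 : a * x < 1 := by nlinarith [hx.1, hx.2]
  nlinarith

private lemma bohrF_at_a {a : ℝ} (ha0 : 0.892644 ≤ a) (ha1 : a < 1) :
    1 < bohrF a a := by
  have hA : (0:ℝ) < a := by linarith
  have ht : (0.892644:ℝ)^2 ≤ a^2 := by nlinarith
  have ht1 : a^2 < 1 := by nlinarith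
  have h := num_all ht ht1
  have hpos : (0:ℝ) < 1 - a^2 := by linarith
  have hexp : Real.exp (2*a^2) < (1-a^2)⁻¹ := by
    rw [inv_eq_one_div, lt_div_iff₀ hpos]
    nlinarith
  have hL : 2*a^2 < -Real.log (1-a^2) := by
    have := Real.log_lt_log (Real.exp_pos _) hexp
    rwa [Real.log_exp, Real.log_inv] at this
  have hident : bohrF a a = 2*a^2 - 1 + (1-a^2) * (-Real.log (1-a^2))/a^2 := by
    unfold bohrF; field_simp; ring
  rw [hident]
  have key : 2*(1-a^2) < (1-a^2) * (-Real.log (1-a^2))/a^2 := by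
    rw [lt_div_iff₀ (by positivity)]
    nlinarith
  linarith

private lemma bohrF_root {a : ℝ} (ha0 : 0.892644 ≤ a) (ha1 : a < 1) :
    ∃ rs ∈ Set.Ioo (0:ℝ) a, bohrF a rs = 1 := by
  have hA : (0:ℝ) < a := by linarith
  have hsub : Set.Icc (0:ℝ) a ⊆ Set.Icc 0 1 := Set.Icc_subset_Icc le_rfl ha1.le
  have hcont : ContinuousOn (bohrF a) (Set.Icc 0 a) :=
    (bohrF_continuousOn ha0 ha1).mono hsub
  have hIvt := intermediate_value_Ioo hA.le hcont
  have h1 : (1:ℝ) ∈ Set.Ioo (bohrF a 0) (bohrF a a) := by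
    rw [bohrF_zero]; exact ⟨one_pos, bohrF_at_a ha0 ha1⟩
  obtain ⟨rs, hrs, heq⟩ := hIvt h1
  exact ⟨rs, hrs, heq⟩

private lemma mobius_norm_le {w z : ℂ} (hw : ‖w‖ ≤ 1) (hz : ‖z‖ ≤ 1) :
    ‖z - w‖ ≤ ‖1 - (starRingEnd ℂ) w * z‖ := by
  have hw' : Complex.normSq w ≤ 1 := by
    rw [Complex.normSq_eq_norm_sq]
    nlinarith [norm_nonneg w]
  have hz' : Complex.normSq z ≤ 1 := by
    rw [Complex.normSq_eq_norm_sq]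
    nlinarith [norm_nonneg z]
  have key : Complex.normSq (1 - (starRingEnd ℂ) w * z) - Complex.normSq (z - w)
      = (1 - Complex.normSq w) * (1 - Complex.normSq z) := by
    simp only [Complex.normSq_apply, Complex.sub_re, Complex.sub_im, Complex.mul_re,
      Complex.mul_im, Complex.one_re, Complex.one_im, Complex.conj_re, Complex.conj_im]
    ring
  have h2 : Complex.normSq (z - w) ≤ Complex.normSq (1 - (starRingEnd ℂ) w * z) := by
    nlinarith
  rw [Complex.norm_def, Complex.norm_def]
  exact Real.sqrt_le_sqrt h2

private lemma key_quad {u D w : ℂ} {ρ aa : ℝ} (hu : ‖u‖ ≤ ρ*‖D‖) (hw : ‖w‖ = aa)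
    (haρ : aa*ρ ≤ 1) (hρ : 0 ≤ ρ) :
    ‖u + (ρ:ℂ)^2 * w * D‖ ≤ ρ * ‖D + (starRingEnd ℂ) w * u‖ := by
  have hu2 : Complex.normSq u ≤ ρ^2 * Complex.normSq D := by
    rw [Complex.normSq_eq_norm_sq, Complex.normSq_eq_norm_sq]
    nlinarith [norm_nonneg u, norm_nonneg D, mul_nonneg hρ (norm_nonneg D)]
  have hw2 : Complex.normSq w * ρ^2 ≤ 1 := by
    have : Complex.normSq w = aa^2 := by
      rw [Complex.normSq_eq_norm_sq, hw]
    rw [this]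
    have haa : 0 ≤ aa := hw ▸ norm_nonneg w
    have h := mul_le_mul haρ haρ (mul_nonneg haa hρ) one_pos.le
    nlinarith [h]
  have key : ρ^2 * Complex.normSq (D + (starRingEnd ℂ) w * u)
      - Complex.normSq (u + (ρ:ℂ)^2 * w * D)
      = (ρ^2 * Complex.normSq D - Complex.normSq u) * (1 - Complex.normSq w * ρ^2) := by
    simp only [Complex.normSq_apply, Complex.add_re, Complex.add_im, Complex.mul_re,
      Complex.mul_im, Complex.conj_re, Complex.conj_im, Complex.ofReal_re, Complex.ofReal_im,
      Complex.sub_re, Complex.sub_im, pow_two]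
    ring
  have h2 : Complex.normSq (u + (ρ:ℂ)^2 * w * D)
      ≤ ρ^2 * Complex.normSq (D + (starRingEnd ℂ) w * u) := by
    nlinarith
  rw [Complex.norm_def, Complex.norm_def]
  calc Real.sqrt (Complex.normSq (u + (ρ:ℂ)^2 * w * D))
      ≤ Real.sqrt (ρ^2 * Complex.normSq (D + (starRingEnd ℂ) w * u)) := Real.sqrt_le_sqrt h2
    _ = ρ * Real.sqrt (Complex.normSq (D + (starRingEnd ℂ) w * u)) := by
        rw [Real.sqrt_mul (sq_nonneg ρ), Real.sqrt_sq hρ]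

set_option maxHeartbeats 1000000 in
private lemma coeff_abs_summable {B : ℕ → ℂ} {g : ℂ → ℂ}
    (hg : ∀ z ∈ Metric.ball (0:ℂ) 1, HasSum (fun n : ℕ => B n * z ^ n) (g z))
    {ρ : ℝ} (h0 : 0 ≤ ρ) (h1 : ρ < 1) :
    Summable (fun n => ‖B n‖ * ρ^n) := by
  set σ : ℝ := (1+ρ)/2 with hσdef
  have hσ0 : 0 < σ := by positivity
  have hρσ : ρ < σ := by rw [hσdef]; linarith
  have hσ1 : σ < 1 := by rw [hσdef]; linarith
  have hz : (σ:ℂ) ∈ Metric.ball (0:ℂ) 1 := by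
    rw [mem_ball_zero_iff, Complex.norm_real]; simpa [abs_of_nonneg hσ0.le] using hσ1
  have hs := (hg _ hz).summable
  have ht : Tendsto (fun n => ‖B n * (σ:ℂ)^n‖) atTop (nhds 0) := by
    simpa using (hs.tendsto_atTop_zero).norm
  obtain ⟨C, hC⟩ := ht.bddAbove_range
  have hCnn : ∀ n : ℕ, ‖B n‖ * σ^n ≤ C := by
    intro n
    have := hC (Set.mem_range_self n)
    simpa [norm_mul, norm_pow, Real.norm_eq_abs, abs_of_nonneg hσ0.le] using this
  have hgeo : Summable (fun n : ℕ => C * (ρ/σ)^n) := by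
    apply Summable.mul_left
    apply summable_geometric_of_lt_one (by positivity)
    rw [div_lt_one hσ0]; exact hρσ
  refine Summable.of_nonneg_of_le (fun n => by positivity) (fun n => ?_) hgeo
  have key : ‖B n‖ * ρ^n = (‖B n‖ * σ^n) * (ρ/σ)^n := by
    rw [mul_assoc, ← mul_pow, mul_div_cancel₀ _ hσ0.ne']
  rw [key]
  exact mul_le_mul_of_nonneg_right (hCnn n) (by positivity)

private lemma g_diffOn {B : ℕ → ℂ} {g : ℂ → ℂ}
    (hg : ∀ z ∈ Metric.ball (0:ℂ) 1, HasSum (fun n : ℕ => B n * z ^ n) (g z)) :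
    DifferentiableOn ℂ g (Metric.ball (0:ℂ) 1) := by
  set p := FormalMultilinearSeries.ofScalars ℂ B with hpdef
  have hrad : 1 ≤ p.radius := by
    apply ENNReal.le_of_forall_nnreal_lt
    intro r hr
    apply p.le_radius_of_summable_norm
    have hr1 : (r:ℝ) < 1 := by exact_mod_cast ENNReal.coe_lt_one_iff.mp hr
    have := coeff_abs_summable hg (r.coe_nonneg) hr1
    apply this.congr
    intro n
    rw [FormalMultilinearSeries.ofScalars_norm]
  have hps : HasFPowerSeriesOnBall p.sum p 0 p.radius :=
    p.hasFPowerSeriesOnBall (lt_of_lt_of_le one_pos.ne'.bot_lt hrad)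
  have hsub : Metric.ball (0:ℂ) 1 ⊆ Metric.eball (0:ℂ) p.radius := by
    intro z hz
    rw [EMetric.mem_ball, edist_zero_right]
    calc (‖z‖₊ : ENNReal) < 1 := by
          rw [← ENNReal.coe_one, ENNReal.coe_lt_coe]
          exact_mod_cast mem_ball_zero_iff.mp hz
      _ ≤ p.radius := hrad
  have heq : Set.EqOn g p.sum (Metric.ball (0:ℂ) 1) := by
    intro z hz
    have h1 := (hg z hz).tsum_eq
    rw [FormalMultilinearSeries.sum, ← h1]
    apply tsum_congr
    intro n
    rw [FormalMultilinearSeries.ofScalars_apply_eq, smul_eq_mul]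
  exact ((hps.differentiableOn.mono hsub).congr heq)

private lemma g_at_zero {B : ℕ → ℂ} {g : ℂ → ℂ}
    (hg : ∀ z ∈ Metric.ball (0:ℂ) 1, HasSum (fun n : ℕ => B n * z ^ n) (g z)) :
    g 0 = B 0 := by
  have h0 : (0:ℂ) ∈ Metric.ball (0:ℂ) 1 := by simp
  have := (hg 0 h0).tsum_eq
  rw [← this]
  rw [tsum_eq_single 0]
  · simp
  · intro n hn
    simp [zero_pow hn]

private lemma schwarz_pick {B : ℕ → ℂ} {g : ℂ → ℂ}
    (hg : ∀ z ∈ Metric.ball (0:ℂ) 1, HasSum (fun n : ℕ => B n * z ^ n) (g z))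
    (hb : ∀ z ∈ Metric.ball (0:ℂ) 1, ‖g z‖ ≤ 1) (hB : ‖B 0‖ < 1) :
    ∀ z ∈ Metric.ball (0:ℂ) 1,
      ‖g z - B 0‖ ≤ ‖z‖ * ‖1 - (starRingEnd ℂ) (B 0) * g z‖ := by
  intro z hz
  set w := B 0 with hwdef
  have hDen : ∀ ζ ∈ Metric.ball (0:ℂ) 1, (0:ℝ) < 1 - ‖w‖ ∧ 1 - ‖w‖ ≤ ‖1 - (starRingEnd ℂ) w * g ζ‖ := by
    intro ζ hζ
    refine ⟨by linarith, ?_⟩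
    have h1 : ‖(starRingEnd ℂ) w * g ζ‖ ≤ ‖w‖ := by
      rw [norm_mul, RCLike.norm_conj]
      calc ‖w‖ * ‖g ζ‖ ≤ ‖w‖ * 1 := mul_le_mul_of_nonneg_left (hb ζ hζ) (norm_nonneg w)
        _ = ‖w‖ := mul_one _
    calc 1 - ‖w‖ ≤ ‖(1:ℂ)‖ - ‖(starRingEnd ℂ) w * g ζ‖ := by rw [norm_one]; linarith
      _ ≤ ‖1 - (starRingEnd ℂ) w * g ζ‖ := norm_sub_norm_le _ _
  have hDne : ∀ ζ ∈ Metric.ball (0:ℂ) 1, 1 - (starRingEnd ℂ) w * g ζ ≠ 0 := by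
    intro ζ hζ
    intro hc
    have := (hDen ζ hζ).2
    rw [hc, norm_zero] at this
    linarith [(hDen ζ hζ).1]
  set φ : ℂ → ℂ := fun ζ => (g ζ - w)/(1 - (starRingEnd ℂ) w * g ζ) with hφdef
  have hgd := g_diffOn hg
  have hφd : DifferentiableOn ℂ φ (Metric.ball (0:ℂ) 1) := by
    apply DifferentiableOn.div (hgd.sub_const w)
    · exact (differentiableOn_const _).sub ((differentiableOn_const _).mul hgd)
    · exact hDne
  have hφ0 : φ 0 = 0 := by
    rw [hφdef]
    simp only []
    rw [g_at_zero hg, ← hwdef, sub_self, zero_div]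
  have hφ1 : ∀ ζ ∈ Metric.ball (0:ℂ) 1, ‖φ ζ‖ ≤ 1 := by
    intro ζ hζ
    rw [hφdef]
    simp only [norm_div]
    rw [div_le_one (lt_of_lt_of_le (hDen ζ hζ).1 (hDen ζ hζ).2)]
    exact mobius_norm_le hB.le (hb ζ hζ)
  have hφz : ‖φ z‖ ≤ ‖z‖ := by
    apply le_of_forall_pos_le_add
    intro ε hε
    have hmaps : Set.MapsTo φ (Metric.ball (0:ℂ) 1) (Metric.closedBall (φ 0) (1+ε)) := by
      intro ζ hζ
      rw [hφ0, mem_closedBall_zero_iff]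
      exact (lt_of_le_of_lt (hφ1 ζ hζ) (by linarith)).le
    have := Complex.dist_le_div_mul_dist_of_mapsTo_ball hφd hmaps hz
    rw [hφ0, dist_zero_right, dist_zero_right, div_one] at this
    have hz1 : ‖z‖ ≤ 1 := (mem_ball_zero_iff.mp hz).le
    nlinarith [norm_nonneg z]
  have hmul : g z - w = φ z * (1 - (starRingEnd ℂ) w * g z) := by
    rw [hφdef]
    simp only []
    rw [div_mul_cancel₀ _ (hDne z hz)]
  rw [hmul, norm_mul]
  exact mul_le_mul_of_nonneg_right hφz (norm_nonneg _)

private lemma sp_disk {B : ℕ → ℂ} {g : ℂ → ℂ}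
    (hg : ∀ z ∈ Metric.ball (0:ℂ) 1, HasSum (fun n : ℕ => B n * z ^ n) (g z))
    (hb : ∀ z ∈ Metric.ball (0:ℂ) 1, ‖g z‖ ≤ 1) (hB : ‖B 0‖ < 1) :
    ∀ z ∈ Metric.ball (0:ℂ) 1,
      ‖((1 - ‖B 0‖^2*‖z‖^2 : ℝ) : ℂ) * g z - ((1 - ‖z‖^2 : ℝ) : ℂ) * B 0‖
        ≤ ‖z‖ * (1 - ‖B 0‖^2) := by
  intro z hz
  set w := B 0 with hwdef
  set u := g z - w with hudef
  set D := 1 - (starRingEnd ℂ) w * g z with hDdef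
  have hz1 : ‖z‖ < 1 := mem_ball_zero_iff.mp hz
  have hconj : (starRingEnd ℂ) w * w = ((‖w‖ : ℝ) : ℂ)^2 := by
    rw [mul_comm, Complex.mul_conj]
    norm_cast
    simp [Complex.normSq_eq_norm_sq]
  have hident : ((1 - ‖w‖^2*‖z‖^2 : ℝ) : ℂ) * g z - ((1 - ‖z‖^2 : ℝ) : ℂ) * w
      = u + ((‖z‖:ℝ):ℂ)^2 * w * D := by
    rw [hudef, hDdef]
    push_cast
    linear_combination (((‖z‖:ℝ):ℂ)^2) * (g z) * hconj
  rw [hident]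
  have hkey := key_quad (u := u) (D := D) (w := w) (ρ := ‖z‖) (aa := ‖w‖)
    (schwarz_pick hg hb hB z hz) rfl
    (by nlinarith [norm_nonneg w, norm_nonneg z]) (norm_nonneg z)
  refine hkey.trans ?_
  have hDu : D + (starRingEnd ℂ) w * u = ((1 - ‖w‖^2 : ℝ) : ℂ) := by
    rw [hDdef, hudef]
    push_cast
    linear_combination -hconj
  rw [hDu]
  rw [Complex.norm_real, Real.norm_eq_abs, abs_of_nonneg (by nlinarith [norm_nonneg w])]

private lemma sp_disk' {B : ℕ → ℂ} {g : ℂ → ℂ}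
    (hg : ∀ z ∈ Metric.ball (0:ℂ) 1, HasSum (fun n : ℕ => B n * z ^ n) (g z))
    (hb : ∀ z ∈ Metric.ball (0:ℂ) 1, ‖g z‖ ≤ 1) (hB : ‖B 0‖ < 1) :
    ∀ z ∈ Metric.ball (0:ℂ) 1,
      ‖g z - (((1 - ‖z‖^2)/(1 - ‖B 0‖^2*‖z‖^2) : ℝ) : ℂ) * B 0‖
        ≤ ‖z‖ * (1 - ‖B 0‖^2)/(1 - ‖B 0‖^2*‖z‖^2) := by
  intro z hz
  have hz1 : ‖z‖ < 1 := mem_ball_zero_iff.mp hz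
  have hB2 : ‖B 0‖^2 ≤ 1 := by nlinarith [norm_nonneg (B 0)]
  have hz2 : ‖z‖^2 < 1 := by nlinarith [norm_nonneg z]
  have hpos : (0:ℝ) < 1 - ‖B 0‖^2*‖z‖^2 := by
    nlinarith [mul_le_mul hB2 hz2.le (by positivity : (0:ℝ) ≤ ‖z‖^2) one_pos.le]
  rw [div_eq_mul_inv, ← div_eq_mul_inv, le_div_iff₀ hpos]
  have hnorm : ‖g z - (((1 - ‖z‖^2)/(1 - ‖B 0‖^2*‖z‖^2) : ℝ) : ℂ) * B 0‖ * (1 - ‖B 0‖^2*‖z‖^2)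
      = ‖((1 - ‖B 0‖^2*‖z‖^2 : ℝ) : ℂ) * (g z - (((1 - ‖z‖^2)/(1 - ‖B 0‖^2*‖z‖^2) : ℝ) : ℂ) * B 0)‖ := by
    rw [norm_mul, Complex.norm_real, Real.norm_eq_abs, abs_of_pos hpos, mul_comm]
  rw [hnorm]
  have harg : ((1 - ‖B 0‖^2*‖z‖^2 : ℝ) : ℂ) * (g z - (((1 - ‖z‖^2)/(1 - ‖B 0‖^2*‖z‖^2) : ℝ) : ℂ) * B 0)
      = ((1 - ‖B 0‖^2*‖z‖^2 : ℝ) : ℂ) * g z - ((1 - ‖z‖^2 : ℝ) : ℂ) * B 0 := by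
    rw [mul_sub, ← mul_assoc, ← Complex.ofReal_mul, mul_div_cancel₀ _ hpos.ne']
  rw [harg]
  exact sp_disk hg hb hB z hz

private lemma exp_coeff_integral (d : ℕ → ℂ) (hd : Summable fun n => ‖d n‖) (m : ℕ) :
    ∫ θ in (0:ℝ)..(2*Real.pi), Complex.exp (-(m:ℂ)*θ*Complex.I)
        * (∑' n : ℕ, d n * Complex.exp ((n:ℂ)*θ*Complex.I))
      = 2*Real.pi * d m := by
  have h2π : (0:ℝ) ≤ 2*Real.pi := by positivity
  set u : ℕ → ℝ → ℂ := fun n θ => d n * Complex.exp (((n:ℂ)-m)*θ*Complex.I) with hudef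
  have hpt : ∀ θ : ℝ, Complex.exp (-(m:ℂ)*θ*Complex.I)
      * (∑' n : ℕ, d n * Complex.exp ((n:ℂ)*θ*Complex.I)) = ∑' n : ℕ, u n θ := by
    intro θ
    rw [← tsum_mul_left]
    apply tsum_congr
    intro n
    rw [hudef]
    simp only []
    rw [mul_comm (Complex.exp _), mul_assoc, ← Complex.exp_add]
    congr 2
    ring
  have hnorm : ∀ n θ, ‖u n θ‖ = ‖d n‖ := by
    intro n θ
    rw [hudef]
    simp only [norm_mul]
    have h : ((n:ℂ)-m)*θ*Complex.I = (((n:ℝ)-m)*θ : ℝ)*Complex.I := by push_cast; ring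
    rw [h, Complex.norm_exp_ofReal_mul_I, mul_one]
  have hcont : ∀ n, Continuous (u n) := by
    intro n
    apply continuous_const.mul
    apply Complex.continuous_exp.comp
    fun_prop
  simp only [hpt]
  rw [intervalIntegral.integral_of_le h2π]
  rw [MeasureTheory.integral_tsum (fun n => (hcont n).aestronglyMeasurable) ?hsum]
  case hsum =>
    have hvol : ∀ n : ℕ, ∫⁻ θ in Set.Ioc (0:ℝ) (2*Real.pi), ‖u n θ‖₊
        = (‖d n‖₊ : ENNReal) * ENNReal.ofReal (2*Real.pi) := by
      intro n
      have h : (fun θ => (‖u n θ‖₊ : ENNReal)) = fun _ => (‖d n‖₊ : ENNReal) := by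
        funext θ
        congr 1
        ext
        exact hnorm n θ
      rw [h, MeasureTheory.lintegral_const, Measure.restrict_apply MeasurableSet.univ,
        Set.univ_inter, Real.volume_Ioc, sub_zero]
    simp only [enorm_eq_nnnorm, hvol]
    rw [ENNReal.tsum_mul_right]
    apply ENNReal.mul_ne_top _ ENNReal.ofReal_ne_top
    rw [ENNReal.tsum_coe_ne_top_iff_summable]
    exact NNReal.summable_coe.mp (by simpa using hd)
  have hval : ∀ n : ℕ, (∫ θ in Set.Ioc (0:ℝ) (2*Real.pi), u n θ)
      = if n = m then 2*Real.pi * d m else 0 := by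
    intro n
    rw [← intervalIntegral.integral_of_le h2π]
    by_cases hnm : n = m
    · subst hnm
      simp only [if_pos rfl]
      have h : (fun θ : ℝ => u n θ) = fun _ => d n := by
        funext θ
        rw [hudef]
        simp
      rw [h, intervalIntegral.integral_const, sub_zero, Complex.real_smul]
      push_cast
      ring
    · simp only [if_neg hnm]
      have hc : ((n:ℂ)-m)*Complex.I ≠ 0 := by
        apply mul_ne_zero _ Complex.I_ne_zero
        rw [sub_ne_zero]
        exact_mod_cast (fun h => hnm (Nat.cast_injective h))
      have hrw : (fun θ : ℝ => u n θ)
          = fun θ : ℝ => d n * Complex.exp ((((n:ℂ)-m)*Complex.I) * θ) := by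
        funext θ
        rw [hudef]
        simp only []
        congr 2
        ring
      rw [hrw, intervalIntegral.integral_const_mul, integral_exp_mul_complex hc]
      have h1 : Complex.exp (((n:ℂ)-m)*Complex.I * ((2*Real.pi : ℝ):ℂ)) = 1 := by
        have h2 := Complex.exp_int_mul_two_pi_mul_I ((n:ℤ) - m)
        convert h2 using 2
        push_cast
        ring
      have h0 : Complex.exp (((n:ℂ)-m)*Complex.I * ((0:ℝ):ℂ)) = 1 := by
        norm_num
      rw [h1, h0, sub_self, zero_div, mul_zero]
  calc ∑' n, ∫ θ in Set.Ioc (0:ℝ) (2*Real.pi), u n θ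
      = ∑' n : ℕ, if n = m then 2*Real.pi * d m else 0 := tsum_congr hval
    _ = 2*Real.pi * d m := tsum_ite_eq m _

private lemma conj_sum_mul_integral (d e : ℕ → ℂ) (he : Summable fun n => ‖e n‖) (N : ℕ) :
    ∫ θ in (0:ℝ)..(2*Real.pi),
        (∑ n ∈ range N, (starRingEnd ℂ) (d n) * Complex.exp (-(n:ℂ)*θ*Complex.I))
          * (∑' n : ℕ, e n * Complex.exp ((n:ℂ)*θ*Complex.I))
      = 2*Real.pi * ∑ n ∈ range N, (starRingEnd ℂ) (d n) * e n := by
  have hScont : Continuous (fun θ : ℝ => ∑' n : ℕ, e n * Complex.exp ((n:ℂ)*θ*Complex.I)) := by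
    apply continuous_tsum _ he
    · intro n θ
      rw [norm_mul]
      have h : (n:ℂ)*θ*Complex.I = (((n:ℝ))*θ : ℝ)*Complex.I := by push_cast; ring
      rw [h, Complex.norm_exp_ofReal_mul_I, mul_one]
    · intro n
      apply continuous_const.mul
      apply Complex.continuous_exp.comp
      fun_prop
  have hrw : ∀ θ : ℝ,
      (∑ n ∈ range N, (starRingEnd ℂ) (d n) * Complex.exp (-(n:ℂ)*θ*Complex.I))
        * (∑' n : ℕ, e n * Complex.exp ((n:ℂ)*θ*Complex.I))
      = ∑ n ∈ range N, (starRingEnd ℂ) (d n) * (Complex.exp (-(n:ℂ)*θ*Complex.I)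
          * (∑' k : ℕ, e k * Complex.exp ((k:ℂ)*θ*Complex.I))) := by
    intro θ
    rw [Finset.sum_mul]
    simp only [mul_assoc]
  simp only [hrw]
  rw [intervalIntegral.integral_finset_sum]
  · have h : ∀ n ∈ range N, (∫ θ in (0:ℝ)..(2*Real.pi),
        (starRingEnd ℂ) (d n) * (Complex.exp (-(n:ℂ)*θ*Complex.I)
          * (∑' k : ℕ, e k * Complex.exp ((k:ℂ)*θ*Complex.I))))
        = 2*Real.pi * ((starRingEnd ℂ) (d n) * e n) := by
      intro n _
      rw [intervalIntegral.integral_const_mul, exp_coeff_integral e he n]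
      ring
    rw [Finset.sum_congr rfl h, ← Finset.mul_sum]
  · intro n _
    apply Continuous.intervalIntegrable
    apply continuous_const.mul
    apply Continuous.mul _ hScont
    apply Complex.continuous_exp.comp
    fun_prop

private lemma parseval_bound (d : ℕ → ℂ) (hd : Summable fun n => ‖d n‖) (M : ℝ)
    (hM : ∀ θ : ℝ, ‖∑' n : ℕ, d n * Complex.exp ((n:ℂ)*θ*Complex.I)‖ ≤ M) (N : ℕ) :
    ∑ n ∈ range N, ‖d n‖^2 ≤ M^2 := by
  have h2π : (0:ℝ) ≤ 2*Real.pi := by positivity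
  have hM0 : 0 ≤ M := le_trans (norm_nonneg _) (hM 0)
  set S : ℝ → ℂ := fun θ => ∑' n : ℕ, d n * Complex.exp ((n:ℂ)*θ*Complex.I) with hSdef
  have hScont : Continuous S := by
    apply continuous_tsum _ hd
    · intro n θ
      rw [norm_mul]
      have h : (n:ℂ)*θ*Complex.I = (((n:ℝ))*θ : ℝ)*Complex.I := by push_cast; ring
      rw [h, Complex.norm_exp_ofReal_mul_I, mul_one]
    · intro n
      apply continuous_const.mul
      apply Complex.continuous_exp.comp
      fun_prop
  set P : ℝ → ℂ := fun θ => ∑ n ∈ range N, d n * Complex.exp ((n:ℂ)*θ*Complex.I) with hPdef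
  have hPcont : Continuous P := by
    apply continuous_finset_sum
    intro n _
    apply continuous_const.mul
    apply Complex.continuous_exp.comp
    fun_prop
  have hconjP : ∀ θ : ℝ, (starRingEnd ℂ) (P θ)
      = ∑ n ∈ range N, (starRingEnd ℂ) (d n) * Complex.exp (-(n:ℂ)*θ*Complex.I) := by
    intro θ
    rw [hPdef]
    simp only [map_sum, map_mul]
    apply Finset.sum_congr rfl
    intro n _
    congr 1
    rw [← Complex.exp_conj]
    congr 1
    simp only [map_mul, Complex.conj_I, Complex.conj_ofReal, map_natCast]
    ring
  -- the finitely supported coefficients of P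
  set d' : ℕ → ℂ := fun n => if n < N then d n else 0 with hd'def
  have hd' : Summable fun n => ‖d' n‖ := by
    refine Summable.of_nonneg_of_le (fun n => norm_nonneg _) (fun n => ?_) hd
    rw [hd'def]
    by_cases h : n < N <;> simp [h]
  have hPtsum : ∀ θ : ℝ, P θ = ∑' n : ℕ, d' n * Complex.exp ((n:ℂ)*θ*Complex.I) := by
    intro θ
    rw [tsum_eq_sum (s := range N) (fun n hn => ?_), hPdef]
    · apply Finset.sum_congr rfl
      intro n hn
      rw [hd'def]
      simp [Finset.mem_range.mp hn]
    · rw [hd'def]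
      simp only [Finset.mem_range] at hn
      simp [hn]
  have hV : ∀ n ∈ range N, (starRingEnd ℂ) (d n) * d n = ((‖d n‖^2 : ℝ) : ℂ) := by
    intro n _
    rw [mul_comm, Complex.mul_conj, Complex.normSq_eq_norm_sq]
  -- integral of conj P * S
  have hint1 : ∫ θ in (0:ℝ)..(2*Real.pi), (starRingEnd ℂ) (P θ) * S θ
      = (((2*Real.pi * ∑ n ∈ range N, ‖d n‖^2 : ℝ)) : ℂ) := by
    simp only [hconjP, hSdef]
    rw [conj_sum_mul_integral d d hd N]
    rw [Finset.sum_congr rfl hV]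
    push_cast
    ring
  -- integral of ‖P‖²
  have hint2 : ∫ θ in (0:ℝ)..(2*Real.pi), ‖P θ‖^2
      = 2*Real.pi * ∑ n ∈ range N, ‖d n‖^2 := by
    have hc : ∫ θ in (0:ℝ)..(2*Real.pi), (starRingEnd ℂ) (P θ) * P θ
        = (((2*Real.pi * ∑ n ∈ range N, ‖d n‖^2 : ℝ)) : ℂ) := by
      simp only [hconjP]
      have hre : ∀ θ : ℝ, P θ = ∑' n : ℕ, d' n * Complex.exp ((n:ℂ)*θ*Complex.I) := hPtsum
      simp only [hre]
      rw [conj_sum_mul_integral d d' hd' N]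
      have h : ∀ n ∈ range N, (starRingEnd ℂ) (d n) * d' n = ((‖d n‖^2 : ℝ) : ℂ) := by
        intro n hn
        rw [hd'def]
        simp only [Finset.mem_range.mp hn, if_pos]
        exact hV n hn
      rw [Finset.sum_congr rfl h]
      push_cast
      ring
    have hpt : ∀ θ : ℝ, (starRingEnd ℂ) (P θ) * P θ = ((‖P θ‖^2 : ℝ) : ℂ) := by
      intro θ
      rw [mul_comm, Complex.mul_conj, Complex.normSq_eq_norm_sq]
    simp only [hpt] at hc
    rw [intervalIntegral.integral_ofReal] at hc
    exact_mod_cast hc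
  -- now the AM-GM chain
  have hnormle : 2*Real.pi * ∑ n ∈ range N, ‖d n‖^2
      ≤ ∫ θ in (0:ℝ)..(2*Real.pi), ‖(starRingEnd ℂ) (P θ) * S θ‖ := by
    have h1 : ‖∫ θ in (0:ℝ)..(2*Real.pi), (starRingEnd ℂ) (P θ) * S θ‖
        ≤ ∫ θ in (0:ℝ)..(2*Real.pi), ‖(starRingEnd ℂ) (P θ) * S θ‖ :=
      intervalIntegral.norm_integral_le_integral_norm h2π
    rw [hint1] at h1
    have h2 : ‖(((2*Real.pi * ∑ n ∈ range N, ‖d n‖^2 : ℝ)) : ℂ)‖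
        = 2*Real.pi * ∑ n ∈ range N, ‖d n‖^2 := by
      rw [Complex.norm_real, Real.norm_eq_abs, abs_of_nonneg]
      positivity
    rwa [h2] at h1
  have hptle : ∀ θ ∈ Set.Icc (0:ℝ) (2*Real.pi), ‖(starRingEnd ℂ) (P θ) * S θ‖
      ≤ (‖P θ‖^2 + M^2)/2 := by
    intro θ _
    rw [norm_mul, RCLike.norm_conj]
    have h1 : ‖P θ‖ * ‖S θ‖ ≤ ‖P θ‖ * M :=
      mul_le_mul_of_nonneg_left (hM θ) (norm_nonneg _)
    nlinarith [sq_nonneg (‖P θ‖ - M)]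
  have hmono : ∫ θ in (0:ℝ)..(2*Real.pi), ‖(starRingEnd ℂ) (P θ) * S θ‖
      ≤ ∫ θ in (0:ℝ)..(2*Real.pi), (‖P θ‖^2 + M^2)/2 := by
    apply intervalIntegral.integral_mono_on h2π _ _ hptle
    · apply Continuous.intervalIntegrable
      exact ((Complex.continuous_conj.comp hPcont).mul hScont).norm
    · apply Continuous.intervalIntegrable
      continuity
  have hrhs : ∫ θ in (0:ℝ)..(2*Real.pi), (‖P θ‖^2 + M^2)/2
      = (2*Real.pi * ∑ n ∈ range N, ‖d n‖^2 + 2*Real.pi*M^2)/2 := by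
    rw [intervalIntegral.integral_div]
    congr 1
    rw [intervalIntegral.integral_add]
    · rw [hint2, intervalIntegral.integral_const, smul_eq_mul]
      ring
    · apply Continuous.intervalIntegrable
      exact (hPcont.norm).pow 2
    · exact intervalIntegrable_const
  have := le_trans hnormle (le_trans hmono (le_of_eq hrhs))
  have hπ := Real.pi_pos
  nlinarith [this]


private lemma l2_bound {B : ℕ → ℂ} {g : ℂ → ℂ}
    (hg : ∀ z ∈ Metric.ball (0:ℂ) 1, HasSum (fun n : ℕ => B n * z ^ n) (g z))
    (hb : ∀ z ∈ Metric.ball (0:ℂ) 1, ‖g z‖ ≤ 1) {a : ℝ} (hB0 : ‖B 0‖ = a)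
    (ha0 : 0 < a) (ha1 : a < 1) {ρ : ℝ} (hρ0 : 0 < ρ) (hρ1 : ρ < 1) (N : ℕ) :
    ∑ n ∈ range N, ‖B (n+1)‖^2 * ρ^(2*(n+1)) ≤ (1-a^2)^2*ρ^2/(1-a^2*ρ^2) := by
  have haρ : a*ρ < 1 := by nlinarith
  have hapos : 0 < 1 - a^2*ρ^2 := by nlinarith [mul_pos ha0 hρ0]
  set c1 : ℂ := ((ρ^2*(1-a^2)/(1-a^2*ρ^2) : ℝ) : ℂ) * B 0 with hc1def
  set C : ℕ → ℂ := fun n => if n = 0 then c1 else B n with hCdef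
  set d : ℕ → ℂ := fun n => C n * (ρ:ℂ)^n with hddef
  have hdnorm : ∀ n : ℕ, ‖d (n+1)‖ = ‖B (n+1)‖ * ρ^(n+1) := by
    intro n
    show ‖(if (n+1) = 0 then c1 else B (n+1)) * (ρ:ℂ)^(n+1)‖ = _
    rw [if_neg (Nat.succ_ne_zero n), norm_mul, norm_pow, Complex.norm_real,
      Real.norm_eq_abs, abs_of_nonneg hρ0.le]
  have hd : Summable fun n => ‖d n‖ := by
    rw [← summable_nat_add_iff 1]
    have h := (summable_nat_add_iff (f := fun n => ‖B n‖ * ρ^n) 1).mpr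
      (coeff_abs_summable hg hρ0.le hρ1)
    exact h.congr (fun n => (hdnorm n).symm)
  have hM : ∀ θ : ℝ, ‖∑' n : ℕ, d n * Complex.exp ((n:ℂ)*θ*Complex.I)‖
      ≤ ρ*(1-a^2)/(1-a^2*ρ^2) := by
    intro θ
    set z : ℂ := (ρ:ℂ) * Complex.exp ((θ:ℝ)*Complex.I) with hzdef
    have hznorm : ‖z‖ = ρ := by
      rw [hzdef, norm_mul, Complex.norm_exp_ofReal_mul_I, mul_one, Complex.norm_real,
        Real.norm_eq_abs, abs_of_nonneg hρ0.le]
    have hzball : z ∈ Metric.ball (0:ℂ) 1 := by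
      rw [mem_ball_zero_iff, hznorm]; exact hρ1
    have hsumC : HasSum (fun n : ℕ => C n * z^n) (g z + (c1 - B 0)) := by
      have h2 : HasSum (fun n : ℕ => if n = 0 then (c1 - B 0) else 0) (c1 - B 0) :=
        hasSum_ite_eq 0 _
      have h3 := (hg z hzball).add h2
      have hfun : (fun n : ℕ => B n * z^n + if n = 0 then (c1 - B 0) else 0)
          = fun n : ℕ => C n * z^n := by
        funext n
        cases n with
        | zero => show B 0 * z^0 + (c1 - B 0) = (if 0 = 0 then c1 else B 0) * z^0; simp
        | succ k =>
            show B (k+1) * z^(k+1) + 0 = (if k+1 = 0 then c1 else B (k+1)) * z^(k+1)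
            rw [if_neg (Nat.succ_ne_zero k), add_zero]
      exact hfun ▸ h3
    have htsum : (∑' n : ℕ, d n * Complex.exp ((n:ℂ)*θ*Complex.I)) = g z + (c1 - B 0) := by
      rw [← hsumC.tsum_eq]
      apply tsum_congr
      intro n
      show C n * (ρ:ℂ)^n * Complex.exp ((n:ℂ)*θ*Complex.I) = C n * z^n
      rw [hzdef, mul_pow, ← Complex.exp_nat_mul, mul_assoc]
      congr 2
      ring
    rw [htsum]
    have heq2 : g z + (c1 - B 0)
        = g z - (((1 - ρ^2)/(1 - a^2*ρ^2) : ℝ) : ℂ) * B 0 := by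
      rw [hc1def]
      have hco : (ρ^2*(1-a^2)/(1-a^2*ρ^2) : ℝ) - 1 = -((1-ρ^2)/(1-a^2*ρ^2)) := by
        rw [div_sub_one hapos.ne', ← neg_div]
        congr 1
        ring
      have hcoC : ((ρ^2*(1-a^2)/(1-a^2*ρ^2) : ℝ) : ℂ) - 1
          = -(((1-ρ^2)/(1-a^2*ρ^2) : ℝ) : ℂ) := by
        rw [← Complex.ofReal_one, ← Complex.ofReal_sub, ← Complex.ofReal_neg, hco]
      linear_combination (B 0) * hcoC
    rw [heq2]
    have hsp := sp_disk' hg hb (by rw [hB0]; exact ha1) z hzball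
    rw [hznorm, hB0] at hsp
    exact hsp
  have hP := parseval_bound d hd _ hM (N+1)
  rw [Finset.sum_range_succ'] at hP
  have hd0 : ‖d 0‖ = ρ^2*(1-a^2)/(1-a^2*ρ^2) * a := by
    show ‖(if 0 = 0 then c1 else B 0) * (ρ:ℂ)^0‖ = _
    rw [if_pos rfl, pow_zero, mul_one, hc1def, norm_mul, Complex.norm_real, Real.norm_eq_abs,
      abs_of_nonneg (div_nonneg (mul_nonneg (sq_nonneg ρ) (by nlinarith : (0:ℝ) ≤ 1 - a^2)) hapos.le), hB0]
  have hterm : ∀ n ∈ range N, ‖d (n+1)‖^2 = ‖B (n+1)‖^2 * ρ^(2*(n+1)) := by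
    intro n _
    rw [hdnorm n, mul_pow, ← pow_mul, mul_comm (n+1) 2]
  rw [Finset.sum_congr rfl hterm, hd0] at hP
  have halg : (ρ*(1-a^2)/(1-a^2*ρ^2))^2 - (ρ^2*(1-a^2)/(1-a^2*ρ^2)*a)^2
      = (1-a^2)^2*ρ^2/(1-a^2*ρ^2) := by
    field_simp
  linarith

private lemma cs_bound {B : ℕ → ℂ} {g : ℂ → ℂ}
    (hg : ∀ z ∈ Metric.ball (0:ℂ) 1, HasSum (fun n : ℕ => B n * z ^ n) (g z))
    (hb : ∀ z ∈ Metric.ball (0:ℂ) 1, ‖g z‖ ≤ 1) {a : ℝ} (hB0 : ‖B 0‖ = a)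
    (ha0 : 0 < a) (ha1 : a < 1) {t : ℝ} (ht0 : 0 < t) (hta : t < a) (N : ℕ) :
    ∑ n ∈ range N, ‖B (n+1)‖ * t^(n+1) ≤ (1-a^2)*t/(1-a*t) := by
  set ρ : ℝ := Real.sqrt (t/a) with hρdef
  have hta' : t/a < 1 := (div_lt_one ha0).mpr hta
  have hρsq : ρ^2 = t/a := Real.sq_sqrt (by positivity)
  have hρ0 : 0 < ρ := Real.sqrt_pos.mpr (by positivity)
  have hρ1 : ρ < 1 := by nlinarith [hρsq]
  have hat0 : 0 ≤ a*t := by positivity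
  have hat1 : a*t < 1 := by nlinarith
  have haρsq : a^2*ρ^2 = a*t := by
    rw [hρsq]
    field_simp
  have hl2 := l2_bound hg hb hB0 ha0 ha1 hρ0 hρ1 N
  rw [haρsq] at hl2
  have hCS := sum_mul_sq_le_sq_mul_sq (range N)
    (fun n => ‖B (n+1)‖ * ρ^(n+1)) (fun n => Real.sqrt (a*t)^(n+1))
  have hfg : ∀ n ∈ range N, (‖B (n+1)‖ * ρ^(n+1)) * Real.sqrt (a*t)^(n+1)
      = ‖B (n+1)‖ * t^(n+1) := by
    intro n _
    rw [mul_assoc, ← mul_pow]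
    congr 2
    rw [hρdef, ← Real.sqrt_mul (by positivity)]
    rw [show t/a*(a*t) = t^2 by field_simp]
    exact Real.sqrt_sq ht0.le
  have hf2 : ∀ n ∈ range N, (‖B (n+1)‖ * ρ^(n+1))^2 = ‖B (n+1)‖^2 * ρ^(2*(n+1)) := by
    intro n _
    rw [mul_pow, ← pow_mul, mul_comm (n+1) 2]
  have hg2 : ∀ n ∈ range N, (Real.sqrt (a*t)^(n+1))^2 = (a*t)^(n+1) := by
    intro n _
    rw [← pow_mul, mul_comm (n+1) 2, pow_mul, Real.sq_sqrt hat0]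
  rw [Finset.sum_congr rfl hfg, Finset.sum_congr rfl hf2, Finset.sum_congr rfl hg2] at hCS
  have hgeom : ∑ n ∈ range N, (a*t)^(n+1) ≤ a*t/(1-a*t) := by
    have h1 : ∀ n ∈ range N, (a*t)^(n+1) = (a*t) * (a*t)^n := fun n _ => by ring
    rw [Finset.sum_congr rfl h1, ← Finset.mul_sum]
    have h2 : ∑ n ∈ range N, (a*t)^n ≤ (1-a*t)⁻¹ := by
      apply le_trans ((summable_geometric_of_lt_one hat0 hat1).sum_le_tsum (range N) (fun i _ => pow_nonneg hat0 i))
      rw [tsum_geometric_of_lt_one hat0 hat1]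
    rw [div_eq_mul_inv]
    exact mul_le_mul_of_nonneg_left h2 hat0
  have hS0 : 0 ≤ ∑ n ∈ range N, ‖B (n+1)‖ * t^(n+1) := by
    apply Finset.sum_nonneg
    intro n _
    positivity
  have hprod : (∑ n ∈ range N, ‖B (n+1)‖^2 * ρ^(2*(n+1))) * (∑ n ∈ range N, (a*t)^(n+1))
      ≤ ((1-a^2)^2*ρ^2/(1-a*t)) * (a*t/(1-a*t)) := by
    apply mul_le_mul hl2 hgeom (Finset.sum_nonneg (fun n _ => pow_nonneg hat0 _))
    apply div_nonneg (by positivity) (by nlinarith)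
  have halg : ((1-a^2)^2*ρ^2/(1-a*t)) * (a*t/(1-a*t)) = ((1-a^2)*t/(1-a*t))^2 := by
    have hnum : (1-a^2)^2*(t/a)*(a*t) = ((1-a^2)*t)^2 := by field_simp
    rw [hρsq, div_mul_div_comm, hnum, div_pow, ← pow_two]
  have hfin : (∑ n ∈ range N, ‖B (n+1)‖ * t^(n+1))^2 ≤ ((1-a^2)*t/(1-a*t))^2 := by
    calc (∑ n ∈ range N, ‖B (n+1)‖ * t^(n+1))^2
        ≤ (∑ n ∈ range N, ‖B (n+1)‖^2 * ρ^(2*(n+1))) * (∑ n ∈ range N, (a*t)^(n+1)) := hCS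
      _ ≤ ((1-a^2)*t/(1-a*t))^2 := by rw [← halg]; exact hprod
  have hR0 : 0 ≤ (1-a^2)*t/(1-a*t) := by
    apply div_nonneg (mul_nonneg (by nlinarith) ht0.le) (by nlinarith)
  calc ∑ n ∈ range N, ‖B (n+1)‖ * t^(n+1)
      = Real.sqrt ((∑ n ∈ range N, ‖B (n+1)‖ * t^(n+1))^2) := (Real.sqrt_sq hS0).symm
    _ ≤ Real.sqrt (((1-a^2)*t/(1-a*t))^2) := Real.sqrt_le_sqrt hfin
    _ = (1-a^2)*t/(1-a*t) := Real.sqrt_sq hR0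

private lemma partial_bound {B : ℕ → ℂ} {g : ℂ → ℂ}
    (hg : ∀ z ∈ Metric.ball (0:ℂ) 1, HasSum (fun n : ℕ => B n * z ^ n) (g z))
    (hb : ∀ z ∈ Metric.ball (0:ℂ) 1, ‖g z‖ ≤ 1) {a : ℝ} (hB0 : ‖B 0‖ = a)
    (ha0 : 0 < a) (ha1 : a < 1) {r : ℝ} (hr0 : 0 ≤ r) (hra : r < a) (N : ℕ) :
    ∑ n ∈ range N, ‖B n‖ * r^(n+1)/((n:ℝ)+1) ≤ bohrF a r := by
  have hden : ∀ t ∈ Set.Icc (0:ℝ) r, 0 < 1 - a*t := by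
    intro t ht
    nlinarith [ht.1, ht.2]
  have h1a2 : (0:ℝ) ≤ 1 - a^2 := by nlinarith
  -- pointwise bound on the partial sums of the derivative series
  have hpt : ∀ t ∈ Set.Icc (0:ℝ) r, (∑ n ∈ range N, ‖B n‖ * t^n)
      ≤ a + (1-a^2)*t/(1-a*t) := by
    intro t ht
    have hrhs0 : 0 ≤ (1-a^2)*t/(1-a*t) :=
      div_nonneg (mul_nonneg h1a2 ht.1) (hden t ht).le
    cases N with
    | zero => simp; linarith
    | succ K =>
      rw [Finset.sum_range_succ']
      have h0term : ‖B 0‖ * t^0 = a := by rw [pow_zero, mul_one, hB0]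
      rw [h0term]
      have htail : ∑ n ∈ range K, ‖B (n+1)‖ * t^(n+1) ≤ (1-a^2)*t/(1-a*t) := by
        rcases eq_or_lt_of_le ht.1 with h | h
        · have hz : ∀ n ∈ range K, ‖B (n+1)‖ * t^(n+1) = 0 := by
            intro n _
            rw [← h, zero_pow (Nat.succ_ne_zero n), mul_zero]
          rw [Finset.sum_congr rfl hz, Finset.sum_const_zero]
          exact hrhs0
        · exact cs_bound hg hb hB0 ha0 ha1 h (lt_of_le_of_lt ht.2 hra) K
      linarith
  -- each term equals an integral
  have hInt : ∀ n ∈ range N, ‖B n‖ * r^(n+1)/((n:ℝ)+1)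
      = ∫ t in (0:ℝ)..r, ‖B n‖ * t^n := by
    intro n _
    rw [intervalIntegral.integral_const_mul, integral_pow, zero_pow (Nat.succ_ne_zero n),
      sub_zero, mul_div_assoc]
  rw [Finset.sum_congr rfl hInt, ← intervalIntegral.integral_finset_sum (f := fun n t => ‖B n‖ * t^n)
    (fun n _ => ((continuous_const.mul (continuous_pow n)).intervalIntegrable 0 r))]
  -- the antiderivative of the right side
  set Φ : ℝ → ℝ := fun t => a*t + (1-a^2)*(-Real.log (1-a*t)/a^2 - t/a) with hΦdef
  have hderiv : ∀ t ∈ Set.uIcc (0:ℝ) r, HasDerivAt Φ (a + (1-a^2)*t/(1-a*t)) t := by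
    intro t ht
    rw [Set.uIcc_of_le hr0] at ht
    have hdent : 0 < 1 - a*t := hden t ht
    have h1 : HasDerivAt (fun s : ℝ => 1 - a*s) (-a) t := by
      simpa using ((hasDerivAt_id t).const_mul a).const_sub 1
    have h2 : HasDerivAt (fun s : ℝ => Real.log (1 - a*s)) (-a/(1-a*t)) t :=
      h1.log hdent.ne'
    have hlin : HasDerivAt (fun s : ℝ => a*s) a t := by
      simpa using (hasDerivAt_id t).const_mul a
    have hlog2 : HasDerivAt (fun s : ℝ => -Real.log (1-a*s)/a^2) ((a/(1-a*t))/a^2) t := by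
      have := (h2.neg).div_const (a^2)
      simpa [neg_div] using this
    have hdiv : HasDerivAt (fun s : ℝ => s/a) (1/a) t := by
      simpa using (hasDerivAt_id t).div_const a
    have hsum := hlin.add (((hlog2.sub hdiv)).const_mul (1-a^2))
    have heq : a + (1-a^2)*((a/(1-a*t))/a^2 - 1/a) = a + (1-a^2)*t/(1-a*t) := by
      field_simp
      ring
    rw [hΦdef, ← heq]
    exact hsum
  have hint2 : IntervalIntegrable (fun t => a + (1-a^2)*t/(1-a*t)) MeasureTheory.volume 0 r := by
    apply ContinuousOn.intervalIntegrable
    apply ContinuousOn.add continuousOn_const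
    apply ContinuousOn.div (by fun_prop) (by fun_prop)
    intro t ht
    rw [Set.uIcc_of_le hr0] at ht
    exact (hden t ht).ne'
  have hval : ∫ t in (0:ℝ)..r, (a + (1-a^2)*t/(1-a*t)) = bohrF a r := by
    rw [intervalIntegral.integral_eq_sub_of_hasDerivAt hderiv hint2]
    rw [hΦdef]
    simp only [mul_zero, sub_zero, Real.log_one, neg_zero, zero_div]
    unfold bohrF
    field_simp
    ring
  rw [← hval]
  apply intervalIntegral.integral_mono_on hr0 _ hint2 hpt
  exact (continuous_finset_sum _ (fun n _ =>
    continuous_const.mul (continuous_pow n))).intervalIntegrable 0 r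

private lemma mobius_example {a : ℝ} (ha0 : 0.892644 ≤ a) (ha1 : a < 1) {r : ℝ}
    (hr0 : 0 < r) (hr1 : r < 1) :
    ∃ (g : ℂ → ℂ) (B : ℕ → ℂ),
      (∀ z ∈ Metric.ball (0 : ℂ) 1, HasSum (fun n : ℕ => B n * z ^ n) (g z)) ∧
      (∀ z ∈ Metric.ball (0 : ℂ) 1, ‖g z‖ ≤ 1) ∧
      ‖B 0‖ = a ∧
      HasSum (fun n : ℕ => ‖B n‖ * r ^ (n + 1) / ((n : ℝ) + 1)) (bohrF a r) := by
  have hA : (0:ℝ) < a := by linarith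
  refine ⟨fun z => ((a:ℂ) - z)/(1 - (a:ℂ)*z),
    fun n => if n = 0 then (a:ℂ) else -(1-(a:ℂ)^2) * (a:ℂ)^(n-1), ?_, ?_, ?_, ?_⟩
  · -- HasSum
    intro z hz
    have hz1 : ‖z‖ < 1 := mem_ball_zero_iff.mp hz
    have haz : ‖(a:ℂ)*z‖ < 1 := by
      rw [norm_mul, Complex.norm_real, Real.norm_eq_abs, abs_of_pos hA]
      nlinarith [norm_nonneg z]
    have hden : (1 - (a:ℂ)*z) ≠ 0 := by
      intro hc
      have h1 : (1:ℂ) = (a:ℂ)*z := by linear_combination hc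
      have := haz
      rw [← h1, norm_one] at this
      exact lt_irrefl _ this
    have hgeo := hasSum_geometric_of_norm_lt_one haz
    have h2 := hgeo.mul_left (-(1-(a:ℂ)^2)*z)
    have h3 : (fun n : ℕ => (-(1-(a:ℂ)^2)*z) * ((a:ℂ)*z)^n)
        = fun n : ℕ => (if n+1 = 0 then (a:ℂ) else -(1-(a:ℂ)^2) * (a:ℂ)^(n+1-1)) * z^(n+1) := by
      funext n
      rw [if_neg (Nat.succ_ne_zero n)]
      simp only [Nat.add_sub_cancel]
      rw [mul_pow]
      ring
    rw [h3] at h2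
    have h4 := (hasSum_nat_add_iff (f := fun n : ℕ =>
      (if n = 0 then (a:ℂ) else -(1-(a:ℂ)^2) * (a:ℂ)^(n-1)) * z^n) 1).mp h2
    have h5 : -(1-(a:ℂ)^2)*z * (1-(a:ℂ)*z)⁻¹
        + ∑ i ∈ range 1, (if i = 0 then (a:ℂ) else -(1-(a:ℂ)^2) * (a:ℂ)^(i-1)) * z^i
        = ((a:ℂ) - z)/(1 - (a:ℂ)*z) := by
      simp only [Finset.sum_range_one, if_pos rfl, pow_zero, mul_one, reduceIte]
      field_simp
      ring
    rwa [h5] at h4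
  · -- norm bound
    intro z hz
    have hz1 : ‖z‖ < 1 := mem_ball_zero_iff.mp hz
    have haz : ‖(a:ℂ)*z‖ < 1 := by
      rw [norm_mul, Complex.norm_real, Real.norm_eq_abs, abs_of_pos hA]
      nlinarith [norm_nonneg z]
    have hdenpos : (0:ℝ) < ‖1 - (a:ℂ)*z‖ := by
      calc (0:ℝ) < 1 - ‖(a:ℂ)*z‖ := by linarith
        _ = ‖(1:ℂ)‖ - ‖(a:ℂ)*z‖ := by rw [norm_one]
        _ ≤ ‖1 - (a:ℂ)*z‖ := norm_sub_norm_le _ _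
    rw [norm_div, div_le_one hdenpos]
    have hw : ‖(a:ℂ)‖ ≤ 1 := by
      rw [Complex.norm_real, Real.norm_eq_abs, abs_of_pos hA]; exact ha1.le
    have := mobius_norm_le (w := (a:ℂ)) hw hz1.le
    rw [Complex.conj_ofReal] at this
    rwa [norm_sub_rev]
  · -- B 0
    show ‖if (0:ℕ) = 0 then (a:ℂ) else -(1-(a:ℂ)^2) * (a:ℂ)^(0-1)‖ = a
    rw [if_pos rfl, Complex.norm_real, Real.norm_eq_abs, abs_of_pos hA]
  · -- HasSum of the coefficient series
    have habs : |a*r| < 1 := by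
      rw [abs_of_pos (by positivity)]
      nlinarith
    have hBn : ∀ n : ℕ, ‖if n+1 = 0 then (a:ℂ) else -(1-(a:ℂ)^2) * (a:ℂ)^(n+1-1)‖
        = (1-a^2)*a^n := by
      intro n
      rw [if_neg (Nat.succ_ne_zero n)]
      simp only [Nat.add_sub_cancel, norm_mul, norm_neg, norm_pow]
      have h1 : (1:ℂ) - (a:ℂ)^2 = ((1 - a^2 : ℝ) : ℂ) := by push_cast; ring
      rw [h1, Complex.norm_real, Real.norm_eq_abs, Complex.norm_real, Real.norm_eq_abs,
        abs_of_pos hA, abs_of_nonneg (by nlinarith : (0:ℝ) ≤ 1 - a^2)]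
    have hlog := Real.hasSum_pow_div_log_of_abs_lt_one habs
    have hshift := (hasSum_nat_add_iff (f := fun n : ℕ => (a*r)^(n+1)/((n:ℝ)+1)) 1).mpr
      (by
        have : -Real.log (1-a*r) - a*r + ∑ i ∈ range 1, (a*r)^(i+1)/((i:ℝ)+1)
            = -Real.log (1-a*r) := by
          simp
        rw [this]
        exact hlog)
    have hmul := hshift.mul_left ((1-a^2)/a^2)
    have hcongr : (fun n : ℕ => (1-a^2)/a^2 * ((a*r)^(n+1+1)/(((n+1:ℕ):ℝ)+1)))
        = fun n : ℕ => ‖if n+1 = 0 then (a:ℂ) else -(1-(a:ℂ)^2) * (a:ℂ)^(n+1-1)‖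
            * r^(n+1+1) / (((n+1:ℕ):ℝ)+1) := by
      funext n
      rw [hBn n]
      push_cast
      rw [mul_pow, pow_add]
      field_simp
      ring
    rw [hcongr] at hmul
    have h6 := (hasSum_nat_add_iff (f := fun n : ℕ =>
      ‖if n = 0 then (a:ℂ) else -(1-(a:ℂ)^2) * (a:ℂ)^(n-1)‖ * r^(n+1) / ((n:ℝ)+1)) 1).mp hmul
    have h7 : (1-a^2)/a^2 * (-Real.log (1-a*r) - a*r)
        + ∑ i ∈ range 1, ‖if i = 0 then (a:ℂ) else -(1-(a:ℂ)^2) * (a:ℂ)^(i-1)‖ * r^(i+1) / ((i:ℝ)+1)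
        = bohrF a r := by
      simp only [Finset.sum_range_one, reduceIte, pow_one, Nat.cast_zero, zero_add, div_one]
      rw [Complex.norm_real, Real.norm_eq_abs, abs_of_pos hA]
      unfold bohrF
      field_simp
      ring
    rwa [h7] at h6

theorem bohr_radius_derivative_identity_initial_coefficient
    (a : ℝ) (ha0 : 0.892644 ≤ a) (ha1 : a < 1) :
    ∃ rs : ℝ, rs ∈ Set.Ioo 0 a ∧
      (a * rs + (1 / a - a) * (-Real.log (1 - a * rs) / a - rs) = 1) ∧
      (∀ r' ∈ Set.Ioo (0 : ℝ) a,
        a * r' + (1 / a - a) * (-Real.log (1 - a * r') / a - r') = 1 → r' = rs) ∧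
      (∀ (g : ℂ → ℂ) (B : ℕ → ℂ),
        (∀ z ∈ Metric.ball (0 : ℂ) 1, HasSum (fun n : ℕ => B n * z ^ n) (g z)) →
        (∀ z ∈ Metric.ball (0 : ℂ) 1, ‖g z‖ ≤ 1) →
        ‖B 0‖ = a →
        ∀ r : ℝ, 0 ≤ r → r ≤ rs →
          Summable (fun n : ℕ => ‖B n‖ * r ^ (n + 1) / ((n : ℝ) + 1)) ∧
          ∑' n : ℕ, ‖B n‖ * r ^ (n + 1) / ((n : ℝ) + 1) ≤ 1) ∧
      (∀ r : ℝ, rs < r → r < 1 →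
        ∃ (g : ℂ → ℂ) (B : ℕ → ℂ),
          (∀ z ∈ Metric.ball (0 : ℂ) 1, HasSum (fun n : ℕ => B n * z ^ n) (g z)) ∧
          (∀ z ∈ Metric.ball (0 : ℂ) 1, ‖g z‖ ≤ 1) ∧
          ‖B 0‖ = a ∧
          Summable (fun n : ℕ => ‖B n‖ * r ^ (n + 1) / ((n : ℝ) + 1)) ∧
          1 < ∑' n : ℕ, ‖B n‖ * r ^ (n + 1) / ((n : ℝ) + 1)) := by
  have hA : (0:ℝ) < a := by linarith
  obtain ⟨rs, hrsIoo, hrs1⟩ := bohrF_root ha0 ha1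
  have hmono := bohrF_strictMonoOn ha0 ha1
  have hrsIcc : rs ∈ Set.Icc (0:ℝ) 1 := ⟨hrsIoo.1.le, le_trans hrsIoo.2.le ha1.le⟩
  refine ⟨rs, hrsIoo, ?_, ?_, ?_, ?_⟩
  · exact hrs1
  · intro r' hr' heq
    have hr'Icc : r' ∈ Set.Icc (0:ℝ) 1 := ⟨hr'.1.le, le_trans hr'.2.le ha1.le⟩
    apply hmono.injOn hr'Icc hrsIcc
    rw [hrs1]
    exact heq
  · intro g B hg hb hB0 r hr0 hrrs
    have hra : r < a := lt_of_le_of_lt hrrs hrsIoo.2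
    have hrIcc : r ∈ Set.Icc (0:ℝ) 1 := ⟨hr0, by linarith⟩
    have hFr : bohrF a r ≤ 1 := by
      rcases eq_or_lt_of_le hrrs with h | h
      · rw [h, hrs1]
      · rw [← hrs1]
        exact (hmono hrIcc hrsIcc h).le
    have hbound : ∀ N : ℕ, ∑ n ∈ range N, ‖B n‖ * r^(n+1)/((n:ℝ)+1) ≤ 1 :=
      fun N => le_trans (partial_bound hg hb hB0 hA ha1 hr0 hra N) hFr
    have hnn : ∀ n : ℕ, 0 ≤ ‖B n‖ * r^(n+1)/((n:ℝ)+1) := fun n =>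
      div_nonneg (mul_nonneg (norm_nonneg _) (pow_nonneg hr0 _)) (by positivity)
    exact ⟨summable_of_sum_range_le hnn hbound, Real.tsum_le_of_sum_range_le hnn hbound⟩
  · intro r hrsr hr1
    have hr0 : (0:ℝ) < r := lt_trans hrsIoo.1 hrsr
    obtain ⟨g, B, h1, h2, h3, h4⟩ := mobius_example ha0 ha1 hr0 hr1
    refine ⟨g, B, h1, h2, h3, h4.summable, ?_⟩
    rw [h4.tsum_eq, ← hrs1]
    exact hmono hrsIcc ⟨by linarith, hr1.le⟩ hrsr
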